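/- (Singular-value hard-thresholding solves rank penalization) Let Y ∈ ℝ^{n×m} with singular value decomposition Y = U diag(σ_i(Y)) Vᵀ and let λ > 0 be such that no singular value of Y equals λ. Then B̂ = U diag(σ_i(Y)·1_{σ_i(Y)>λ}) Vᵀ is the unique global minimizer over B ∈ ℝ^{n×m} of ‖Y−B‖_F²/2 + (λ²/2)·rank(B). -/

import Mathlib

open Matrix
open scoped RealInnerProductSpace

/-- Squared Frobenius norm of a real matrix. -/
def frobSq {n m : ℕ} (A : Matrix (Fin n) (Fin m) ℝ) : ℝ := ∑ i, ∑ j, A i j ^ 2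

/-- `(U, σ, V)` is a (reduced) singular value decomposition of the real `n × m` matrix `B`. -/
def IsSVD {n m k : ℕ} (B : Matrix (Fin n) (Fin m) ℝ) (U : Matrix (Fin n) (Fin k) ℝ)
    (σ : Fin k → ℝ) (V : Matrix (Fin m) (Fin k) ℝ) : Prop :=
  Uᵀ * U = 1 ∧ Vᵀ * V = 1 ∧ Antitone σ ∧ (∀ i, 0 ≤ σ i) ∧ B = U * diagonal σ * Vᵀ

namespace HTRP

lemma frobSq_def {n m : ℕ} (A : Matrix (Fin n) (Fin m) ℝ) :
    frobSq A = ∑ i, ∑ j, A i j ^ 2 := rfl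

lemma frobSq_eq_trace {n m : ℕ} (A : Matrix (Fin n) (Fin m) ℝ) :
    frobSq A = Matrix.trace (Aᵀ * A) := by
  unfold frobSq Matrix.trace
  rw [Finset.sum_comm]
  simp [Matrix.mul_apply, Matrix.diag, sq]

lemma frobSq_nonneg {n m : ℕ} (A : Matrix (Fin n) (Fin m) ℝ) : 0 ≤ frobSq A :=
  Finset.sum_nonneg fun _ _ => Finset.sum_nonneg fun _ _ => sq_nonneg _

lemma frobSq_eq_zero {n m : ℕ} {A : Matrix (Fin n) (Fin m) ℝ} (h : frobSq A = 0) : A = 0 := by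
  ext i j
  have h1 := (Finset.sum_eq_zero_iff_of_nonneg
    (fun i _ => Finset.sum_nonneg fun j _ => sq_nonneg (A i j))).mp h i (Finset.mem_univ i)
  have h2 := (Finset.sum_eq_zero_iff_of_nonneg
    (fun j _ => sq_nonneg (A i j))).mp h1 j (Finset.mem_univ j)
  simpa using pow_eq_zero_iff (n := 2) (by norm_num) |>.mp h2

lemma trace_conj {a b : ℕ} (V : Matrix (Fin a) (Fin b) ℝ) (Z : Matrix (Fin b) (Fin b) ℝ)
    (hV : Vᵀ * V = 1) : Matrix.trace (V * Z * Vᵀ) = Matrix.trace Z := by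
  rw [Matrix.trace_mul_comm, ← Matrix.mul_assoc, hV, Matrix.one_mul]

lemma frobSq_add {n m : ℕ} (X Z : Matrix (Fin n) (Fin m) ℝ) :
    frobSq (X + Z) = frobSq X + 2 * Matrix.trace (Xᵀ * Z) + frobSq Z := by
  have h : Matrix.trace (Zᵀ * X) = Matrix.trace (Xᵀ * Z) := by
    rw [← Matrix.trace_transpose, Matrix.transpose_mul, Matrix.transpose_transpose]
  simp only [frobSq_eq_trace, Matrix.transpose_add, Matrix.add_mul, Matrix.mul_add,
    Matrix.trace_add]
  linarith

lemma frobSq_orth_left {n p k : ℕ} (U : Matrix (Fin n) (Fin k) ℝ) (X : Matrix (Fin k) (Fin p) ℝ)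
    (hU : Uᵀ * U = 1) : frobSq (U * X) = frobSq X := by
  rw [frobSq_eq_trace, frobSq_eq_trace, Matrix.transpose_mul, Matrix.mul_assoc,
    ← Matrix.mul_assoc Uᵀ U X, hU, Matrix.one_mul]

lemma frobSq_orth_right {p k m : ℕ} (X : Matrix (Fin p) (Fin k) ℝ) (V : Matrix (Fin m) (Fin k) ℝ)
    (hV : Vᵀ * V = 1) : frobSq (X * Vᵀ) = frobSq X := by
  rw [frobSq_eq_trace, frobSq_eq_trace, Matrix.transpose_mul, Matrix.transpose_transpose]
  rw [show V * Xᵀ * (X * Vᵀ) = V * (Xᵀ * X) * Vᵀ by simp only [Matrix.mul_assoc]]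
  rw [trace_conj _ _ hV]

lemma frobSq_diagonal {k : ℕ} (w : Fin k → ℝ) : frobSq (diagonal w) = ∑ i, w i ^ 2 := by
  unfold frobSq
  congr 1; ext i
  rw [Finset.sum_eq_single i (fun b _ hb => by simp [Matrix.diagonal_apply_ne' w hb])
    (by simp)]
  simp

lemma rank_conj {n m k : ℕ} (U : Matrix (Fin n) (Fin k) ℝ) (V : Matrix (Fin m) (Fin k) ℝ)
    (X : Matrix (Fin k) (Fin k) ℝ) (hU : Uᵀ * U = 1) (hV : Vᵀ * V = 1) :
    (U * X * Vᵀ).rank = X.rank := by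
  have hX : Uᵀ * (U * X * Vᵀ) * V = X := by
    rw [show Uᵀ * (U * X * Vᵀ) * V = Uᵀ * U * X * (Vᵀ * V) by simp only [Matrix.mul_assoc]]
    rw [hU, hV, Matrix.one_mul, Matrix.mul_one]
  apply le_antisymm
  · exact le_trans (Matrix.rank_mul_le_left _ _) (Matrix.rank_mul_le_right _ _)
  · calc X.rank = (Uᵀ * (U * X * Vᵀ) * V).rank := by rw [hX]
    _ ≤ (Uᵀ * (U * X * Vᵀ)).rank := Matrix.rank_mul_le_left _ _
    _ ≤ (U * X * Vᵀ).rank := Matrix.rank_mul_le_right _ _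

lemma exists_factor {n m : ℕ} (B : Matrix (Fin n) (Fin m) ℝ) :
    ∃ Q : Matrix (Fin n) (Fin B.rank) ℝ, Qᵀ * Q = 1 ∧ B = Q * (Qᵀ * B) := by
  classical
  set W : Submodule ℝ (EuclideanSpace ℝ (Fin n)) := LinearMap.range (Matrix.toEuclideanLin B)
    with hWdef
  have hfin : Module.finrank ℝ W = B.rank := by
    rw [Matrix.rank_eq_finrank_range_toLin B (PiLp.basisFun 2 ℝ (Fin n))
      (PiLp.basisFun 2 ℝ (Fin m)), ← Matrix.toEuclideanLin_eq_toLin]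
  let ob : OrthonormalBasis (Fin B.rank) ℝ W :=
    (stdOrthonormalBasis ℝ W).reindex (finCongr hfin)
  set Q : Matrix (Fin n) (Fin B.rank) ℝ :=
    Matrix.of (fun i a => (ob a : EuclideanSpace ℝ (Fin n)) i) with hQdef
  have hinner : ∀ (x : EuclideanSpace ℝ (Fin n)) (a : Fin B.rank),
      ⟪(ob a : EuclideanSpace ℝ (Fin n)), x⟫ = ∑ i, Q i a * x i := by
    intro x a
    rw [PiLp.inner_apply]
    simp [Q, RCLike.inner_apply, starRingEnd_apply]
    exact Finset.sum_congr rfl fun i _ => mul_comm _ _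
  refine ⟨Q, ?_, ?_⟩
  · ext a b
    have h := orthonormal_iff_ite.mp ob.orthonormal a b
    rw [Submodule.coe_inner, hinner] at h
    simpa [Matrix.mul_apply, Matrix.one_apply, Q] using h
  · ext i j
    set v : EuclideanSpace ℝ (Fin n) :=
      (Matrix.toEuclideanLin B) ((WithLp.equiv 2 (Fin m → ℝ)).symm (Pi.single j 1)) with hvdef
    have hvmem : v ∈ W := LinearMap.mem_range_self _ _
    have hvi : ∀ i', v i' = B i' j := by
      intro i'
      rw [hvdef, WithLp.equiv_symm_apply, Matrix.toEuclideanLin_apply_piLp_toLp]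
      simp
    let ψ : W →ₗ[ℝ] ℝ := (LinearMap.proj i).comp
      ((WithLp.linearEquiv 2 ℝ (Fin n → ℝ)).toLinearMap.comp W.subtype)
    have hψ : ∀ x : W, ψ x = (x : EuclideanSpace ℝ (Fin n)) i := fun x => rfl
    have h2 := congrArg ψ (ob.sum_repr ⟨v, hvmem⟩)
    rw [map_sum] at h2
    simp only [_root_.map_smul, smul_eq_mul, hψ] at h2
    rw [Matrix.mul_apply]
    rw [show B i j = v i from (hvi i).symm, ← h2]
    apply Finset.sum_congr rfl
    intro a _
    rw [ob.repr_apply_apply, Submodule.coe_inner, hinner]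
    rw [Matrix.mul_apply]
    have : ∀ i', (Qᵀ) a i' * B i' j = Q i' a * (v : EuclideanSpace ℝ (Fin n)) i' := by
      intro i'; rw [Matrix.transpose_apply, hvi i']
    simp only [this]
    ring_nf
    rw [mul_comm]
    rfl

end HTRP


/-- Singular-value hard-thresholding solves rank penalization: if no singular value of `Y`
equals `λ > 0`, then `B̂ = U diag(σ_i(Y)·1_{σ_i(Y)>λ}) Vᵀ` is the unique global minimizer of
`‖Y−B‖_F²/2 + (λ²/2)·rank(B)`. -/
theorem hard_thresholding_rank_penalty {n m : ℕ}
    (lam : ℝ) (hlam : 0 < lam)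
    (Y : Matrix (Fin n) (Fin m) ℝ)
    (U : Matrix (Fin n) (Fin (min n m)) ℝ) (σ : Fin (min n m) → ℝ)
    (V : Matrix (Fin m) (Fin (min n m)) ℝ)
    (hY : IsSVD Y U σ V)
    (hnotie : ∀ i, σ i ≠ lam) :
    ∀ B : Matrix (Fin n) (Fin m) ℝ,
      B ≠ U * diagonal (fun i => if lam < σ i then σ i else 0) * Vᵀ →
      frobSq (Y - U * diagonal (fun i => if lam < σ i then σ i else 0) * Vᵀ) / 2
          + lam ^ 2 / 2 * ((U * diagonal (fun i => if lam < σ i then σ i else 0) * Vᵀ).rank : ℝ)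
        < frobSq (Y - B) / 2 + lam ^ 2 / 2 * (B.rank : ℝ) := by
  obtain ⟨hU, hV, -, hσ0, hYeq⟩ := hY
  intro B hB
  set σ' : Fin (min n m) → ℝ := fun i => if lam < σ i then σ i else 0 with hσ'def
  set Bhat : Matrix (Fin n) (Fin m) ℝ := U * diagonal σ' * Vᵀ with hBhatdef
  -- value at Bhat
  have hsub : Y - Bhat = U * diagonal (fun i => σ i - σ' i) * Vᵀ := by
    have hd : diagonal (fun i => σ i - σ' i) = diagonal σ - diagonal σ' := by
      rw [Matrix.diagonal_sub]
    rw [hd, Matrix.mul_sub, Matrix.sub_mul, hYeq, hBhatdef]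
  have hfro1 : frobSq (Y - Bhat) = ∑ i, (σ i - σ' i) ^ 2 := by
    rw [hsub, Matrix.mul_assoc, HTRP.frobSq_orth_left _ _ hU,
      HTRP.frobSq_orth_right _ _ hV, HTRP.frobSq_diagonal]
  have hrank1 : (Bhat.rank : ℝ) = ∑ i, (if lam < σ i then (1:ℝ) else 0) := by
    rw [Finset.sum_boole, hBhatdef, HTRP.rank_conj U V _ hU hV, Matrix.rank_diagonal,
      Fintype.card_subtype]
    norm_cast
    apply congrArg Finset.card
    apply Finset.filter_congr
    intro i _
    by_cases h : lam < σ i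
    · simp [hσ'def, h, ne_of_gt (lt_trans hlam h)]
    · simp [hσ'def, h]
  -- orthonormal column factorization of B
  obtain ⟨Q, hQ, hBQ⟩ := HTRP.exists_factor B
  set M : Matrix (Fin B.rank) (Fin (min n m)) ℝ := Qᵀ * U with hMdef
  have hUQ : Uᵀ * Q = Mᵀ := by rw [hMdef, Matrix.transpose_mul, Matrix.transpose_transpose]
  set t : Fin (min n m) → ℝ := fun i => ∑ a, (M a i) ^ 2 with htdef
  have hQass : ∀ {p : ℕ} (X : Matrix (Fin B.rank) (Fin p) ℝ), Qᵀ * (Q * X) = X := by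
    intro p X; rw [← Matrix.mul_assoc, hQ, Matrix.one_mul]
  have hUass : ∀ {p : ℕ} (X : Matrix (Fin (min n m)) (Fin p) ℝ), Uᵀ * (U * X) = X := by
    intro p X; rw [← Matrix.mul_assoc, hU, Matrix.one_mul]
  -- fact 1 : pythagoras
  have hXQ : (Y - Q * (Qᵀ * Y))ᵀ * Q = 0 := by
    rw [Matrix.transpose_sub, Matrix.sub_mul, Matrix.transpose_mul Q (Qᵀ * Y),
      Matrix.transpose_mul Qᵀ Y, Matrix.transpose_transpose,
      Matrix.mul_assoc (Yᵀ * Q) Qᵀ Q, hQ, Matrix.mul_one, sub_self]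
  have hZ : Q * (Qᵀ * Y) - B = Q * (Qᵀ * (Y - B)) := by
    rw [Matrix.mul_sub Qᵀ Y B, Matrix.mul_sub Q, ← hBQ]
  have htr0 : (Y - Q * (Qᵀ * Y))ᵀ * (Q * (Qᵀ * Y) - B) = 0 := by
    rw [hZ, ← Matrix.mul_assoc, hXQ, Matrix.zero_mul]
  have hsplit : Y - B = (Y - Q * (Qᵀ * Y)) + (Q * (Qᵀ * Y) - B) :=
    (sub_add_sub_cancel Y (Q * (Qᵀ * Y)) B).symm
  have fact1 : frobSq (Y - B)
      = frobSq (Y - Q * (Qᵀ * Y)) + frobSq (Q * (Qᵀ * Y) - B) := by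
    conv_lhs => rw [hsplit]
    rw [HTRP.frobSq_add, htr0, Matrix.trace_zero]
    ring
  -- fact 2
  have hfroY : frobSq Y = ∑ i, σ i ^ 2 := by
    rw [hYeq, Matrix.mul_assoc, HTRP.frobSq_orth_left _ _ hU,
      HTRP.frobSq_orth_right _ _ hV, HTRP.frobSq_diagonal]
  have hQtY : Qᵀ * Y = M * diagonal σ * Vᵀ := by
    rw [hYeq]
    simp only [hMdef, ← Matrix.mul_assoc]
  have hfroQtY : frobSq (Qᵀ * Y) = ∑ i, σ i ^ 2 * t i := by
    rw [hQtY, HTRP.frobSq_orth_right _ _ hV, HTRP.frobSq_def]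
    simp only [Matrix.mul_diagonal]
    rw [Finset.sum_comm]
    refine Finset.sum_congr rfl fun i _ => ?_
    simp only [htdef]
    rw [Finset.mul_sum]
    exact Finset.sum_congr rfl fun a _ => by ring
  have fact2 : frobSq (Y - Q * (Qᵀ * Y)) = (∑ i, σ i ^ 2) - ∑ i, σ i ^ 2 * t i := by
    have hid : (Y - Q * (Qᵀ * Y))ᵀ * (Y - Q * (Qᵀ * Y))
        = Yᵀ * Y - (Qᵀ * Y)ᵀ * (Qᵀ * Y) := by
      calc (Y - Q * (Qᵀ * Y))ᵀ * (Y - Q * (Qᵀ * Y))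
          = (Y - Q * (Qᵀ * Y))ᵀ * Y - ((Y - Q * (Qᵀ * Y))ᵀ * Q) * (Qᵀ * Y) := by
            rw [Matrix.mul_sub, Matrix.mul_assoc]
        _ = (Y - Q * (Qᵀ * Y))ᵀ * Y := by rw [hXQ, Matrix.zero_mul, sub_zero]
        _ = Yᵀ * Y - (Qᵀ * Y)ᵀ * (Qᵀ * Y) := by
            rw [Matrix.transpose_sub, Matrix.sub_mul, Matrix.transpose_mul Q (Qᵀ * Y),
              Matrix.mul_assoc]
    rw [HTRP.frobSq_eq_trace, hid, Matrix.trace_sub, ← HTRP.frobSq_eq_trace,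
      ← HTRP.frobSq_eq_trace, hfroY, hfroQtY]
  -- fact 3
  have hNid : (U - Q * M)ᵀ * (U - Q * M) = 1 - Mᵀ * M := by
    rw [Matrix.transpose_sub, Matrix.sub_mul, Matrix.mul_sub, Matrix.mul_sub, hU,
      Matrix.transpose_mul Q M, ← Matrix.mul_assoc Uᵀ Q M, hUQ,
      Matrix.mul_assoc Mᵀ Qᵀ U, ← hMdef, Matrix.mul_assoc Mᵀ Qᵀ (Q * M), hQass]
    simp
  have fact3 : ∀ i, 1 - t i = ∑ j, ((U - Q * M) j i) ^ 2 := by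
    intro i
    have h0 : ((U - Q * M)ᵀ * (U - Q * M)) i i
        = ((1 : Matrix (Fin (min n m)) (Fin (min n m)) ℝ) - Mᵀ * M) i i := by
      rw [hNid]
    rw [Matrix.mul_apply] at h0
    simp only [Matrix.transpose_apply, Matrix.sub_apply, Matrix.one_apply_eq,
      Matrix.mul_apply] at h0
    simp only [htdef, sq, Matrix.sub_apply, Matrix.mul_apply]
    linarith [h0]
  -- fact 5
  have hGid : (Q - U * Mᵀ)ᵀ * (Q - U * Mᵀ) = 1 - M * Mᵀ := by
    rw [Matrix.transpose_sub, Matrix.sub_mul, Matrix.mul_sub, Matrix.mul_sub, hQ,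
      Matrix.transpose_mul U Mᵀ, Matrix.transpose_transpose, ← Matrix.mul_assoc Qᵀ U Mᵀ,
      ← hMdef, Matrix.mul_assoc M Uᵀ Q, hUQ, Matrix.mul_assoc M Uᵀ (U * Mᵀ), hUass]
    simp
  have fact5 : frobSq (Q - U * Mᵀ) = (B.rank : ℝ) - ∑ i, t i := by
    rw [HTRP.frobSq_eq_trace, hGid, Matrix.trace_sub, Matrix.trace_one, Matrix.trace_mul_comm]
    congr 1
    · simp
    · simp [Matrix.trace, Matrix.diag, Matrix.mul_apply, htdef, sq]
  -- scalar quantities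
  set A1 : ℝ := ∑ i, (if lam < σ i then (σ i ^ 2 - lam ^ 2) * (1 - t i) else 0) with hA1def
  set A2 : ℝ := ∑ i, (if lam < σ i then 0 else (lam ^ 2 - σ i ^ 2) * t i) with hA2def
  have hsumid : (∑ i, σ i ^ 2) - ∑ i, σ i ^ 2 * t i
      = (∑ i, (σ i - σ' i) ^ 2) + lam ^ 2 * (∑ i, if lam < σ i then (1:ℝ) else 0)
        + A1 + A2 - lam ^ 2 * (∑ i, t i) := by
    rw [hA1def, hA2def, Finset.mul_sum, Finset.mul_sum, ← Finset.sum_sub_distrib,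
      ← Finset.sum_add_distrib, ← Finset.sum_add_distrib, ← Finset.sum_add_distrib,
      ← Finset.sum_sub_distrib]
    refine Finset.sum_congr rfl fun i _ => ?_
    by_cases h : lam < σ i
    · simp only [hσ'def, h, if_true]; ring
    · simp only [hσ'def, h, if_false]; ring
  have hident : frobSq (Y - B) + lam ^ 2 * (B.rank : ℝ)
      = frobSq (Y - Bhat) + lam ^ 2 * (Bhat.rank : ℝ) + frobSq (Q * (Qᵀ * Y) - B)
        + A1 + A2 + lam ^ 2 * frobSq (Q - U * Mᵀ) := by
    rw [fact1, fact2, hfro1, hrank1, fact5, hsumid]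
    ring
  -- nonnegativity
  have hF0 : 0 ≤ frobSq (Q * (Qᵀ * Y) - B) := HTRP.frobSq_nonneg _
  have hGnn : 0 ≤ frobSq (Q - U * Mᵀ) := HTRP.frobSq_nonneg _
  have htnn : ∀ i, 0 ≤ t i := fun i => Finset.sum_nonneg fun a _ => sq_nonneg _
  have ht1 : ∀ i, t i ≤ 1 := by
    intro i
    have h := fact3 i
    have h2 : 0 ≤ ∑ j, ((U - Q * M) j i) ^ 2 :=
      Finset.sum_nonneg fun j _ => sq_nonneg _
    linarith
  have hA1term : ∀ i, 0 ≤ (if lam < σ i then (σ i ^ 2 - lam ^ 2) * (1 - t i) else 0) := by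
    intro i
    by_cases h : lam < σ i
    · rw [if_pos h]
      have h1 : lam ^ 2 ≤ σ i ^ 2 := pow_le_pow_left₀ hlam.le h.le 2
      have h2 := ht1 i
      exact mul_nonneg (by linarith) (by linarith)
    · rw [if_neg h]
  have hA2term : ∀ i, 0 ≤ (if lam < σ i then 0 else (lam ^ 2 - σ i ^ 2) * t i) := by
    intro i
    by_cases h : lam < σ i
    · rw [if_pos h]
    · rw [if_neg h]
      have h1 : σ i ≤ lam := not_lt.mp h
      have h2 : σ i ^ 2 ≤ lam ^ 2 := pow_le_pow_left₀ (hσ0 i) h1 2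
      exact mul_nonneg (by linarith) (htnn i)
  have hA1nn : 0 ≤ A1 := by rw [hA1def]; exact Finset.sum_nonneg fun i _ => hA1term i
  have hA2nn : 0 ≤ A2 := by rw [hA2def]; exact Finset.sum_nonneg fun i _ => hA2term i
  -- strictness
  have hkey : 0 < frobSq (Q * (Qᵀ * Y) - B) + A1 + A2 := by
    by_contra hc
    push_neg at hc
    have hF0z : frobSq (Q * (Qᵀ * Y) - B) = 0 := le_antisymm (by linarith) hF0
    have hA1z : A1 = 0 := le_antisymm (by linarith) hA1nn
    have hA2z : A2 = 0 := le_antisymm (by linarith) hA2nn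
    have hBPY : B = Q * (Qᵀ * Y) := (sub_eq_zero.mp (HTRP.frobSq_eq_zero hF0z)).symm
    have ht1' : ∀ i, lam < σ i → t i = 1 := by
      intro i hi
      have hz : (∑ i, if lam < σ i then (σ i ^ 2 - lam ^ 2) * (1 - t i) else 0) = 0 := by
        rw [← hA1def]; exact hA1z
      have h := (Finset.sum_eq_zero_iff_of_nonneg fun i _ => hA1term i).mp hz i
        (Finset.mem_univ i)
      rw [if_pos hi] at h
      have hσ2 : lam ^ 2 < σ i ^ 2 := pow_lt_pow_left₀ hi hlam.le two_ne_zero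
      rcases mul_eq_zero.mp h with h' | h'
      · linarith
      · linarith
    have ht0' : ∀ i, ¬ lam < σ i → t i = 0 := by
      intro i hi
      have hz : (∑ i, if lam < σ i then 0 else (lam ^ 2 - σ i ^ 2) * t i) = 0 := by
        rw [← hA2def]; exact hA2z
      have h := (Finset.sum_eq_zero_iff_of_nonneg fun i _ => hA2term i).mp hz i
        (Finset.mem_univ i)
      rw [if_neg hi] at h
      have h1 : σ i < lam := lt_of_le_of_ne (not_lt.mp hi) (hnotie i)
      have hσ2 : σ i ^ 2 < lam ^ 2 := pow_lt_pow_left₀ h1 (hσ0 i) two_ne_zero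
      rcases mul_eq_zero.mp h with h' | h'
      · linarith
      · exact h'
    have hQM : Q * M = U * diagonal (fun i => if lam < σ i then (1:ℝ) else 0) := by
      ext j i
      rw [Matrix.mul_diagonal]
      by_cases h : lam < σ i
      · rw [if_pos h, mul_one]
        have h3 := fact3 i
        rw [ht1' i h] at h3
        have hzz : (∑ j, ((U - Q * M) j i) ^ 2) = 0 := by rw [← h3]; ring
        have h4 := (Finset.sum_eq_zero_iff_of_nonneg fun j _ => sq_nonneg _).mp hzz j
          (Finset.mem_univ j)
        have h5 := pow_eq_zero_iff (n := 2) (by norm_num) |>.mp h4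
        rw [Matrix.sub_apply] at h5
        linarith
      · rw [if_neg h, mul_zero]
        have h0 : (∑ a, (M a i) ^ 2) = 0 := by
          have := ht0' i h
          simpa [htdef] using this
        have h4 : ∀ a, M a i = 0 := fun a =>
          pow_eq_zero_iff (n := 2) (by norm_num) |>.mp
            ((Finset.sum_eq_zero_iff_of_nonneg fun a _ => sq_nonneg _).mp h0 a
              (Finset.mem_univ a))
        rw [Matrix.mul_apply]
        exact Finset.sum_eq_zero fun a _ => by rw [h4 a, mul_zero]
    have hBeq : B = Bhat := by
      rw [hBPY, hQtY, hBhatdef]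
      simp only [← Matrix.mul_assoc]
      rw [hQM, Matrix.mul_assoc U (diagonal fun i => if lam < σ i then (1:ℝ) else 0)
        (diagonal σ), Matrix.diagonal_mul_diagonal]
      have he : (fun i => (if lam < σ i then (1:ℝ) else 0) * σ i) = σ' := by
        funext i
        by_cases h : lam < σ i
        · simp [hσ'def, h]
        · simp [hσ'def, h]
      rw [he]
    exact hB hBeq
  have hlamG : 0 ≤ lam ^ 2 * frobSq (Q - U * Mᵀ) := mul_nonneg (sq_nonneg _) hGnn
  linarith [hident, hkey, hlamG]
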